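/- Let G_• be a filtered group of degree s and let k = s+1. If g, g' ∈ HK^k(G_•) satisfy g(ω) = g'(ω) for all ω ≠ (1,...,1), then g(1,...,1) = g'(1,...,1). -/

import Mathlib

open Subgroup

/-- A filtration on a group `G`: a chain `G = G₀ ⊇ G₁ ⊇ ...` of subgroups with
`[Gᵢ, Gⱼ] ⊆ G_{i+j}` for all `i j`. -/
structure IsGroupFiltration {G : Type*} [Group G] (Gf : ℕ → Subgroup G) : Prop where
  top : Gf 0 = ⊤
  mono : ∀ i, Gf (i + 1) ≤ Gf i
  comm : ∀ i j, ⁅Gf i, Gf j⁆ ≤ Gf (i + j)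

/-- The top vertex `(1,…,1)` of the discrete cube `{0,1}^k`. -/
def topVert (k : ℕ) : Fin k → Bool := fun _ => true

/-- The configuration `[x]_{F_S}`: equal to `x` on the upper face `F_S = {ω : ω ⊇ S}`
and the identity elsewhere. -/
def upperFaceConfig {G : Type*} [Group G] {k : ℕ} (S : Finset (Fin k)) (x : G) :
    (Fin k → Bool) → G :=
  fun ω => if ∀ i ∈ S, ω i = true then x else 1

/-- The Host–Kra cube group `HK^k(G_•)`: the subgroup of `G^{{0,1}^k}` generated by the
configurations `[x]_{F_S}` with `x ∈ G_{|S|}`. -/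
def hostKra {G : Type*} [Group G] (Gf : ℕ → Subgroup G) (k : ℕ) :
    Subgroup ((Fin k → Bool) → G) :=
  Subgroup.closure { c | ∃ (S : Finset (Fin k)) (x : G), x ∈ Gf S.card ∧ c = upperFaceConfig S x }


namespace HKAux

open scoped commutatorElement

variable {G : Type*} [Group G]

def ufc {k : ℕ} (S : Finset (Fin k)) (x : G) : (Fin k → Bool) → G :=
  fun ω => if ∀ i ∈ S, ω i = true then x else 1

lemma ufc_inv {k : ℕ} (S : Finset (Fin k)) (x : G) :
    (ufc S x)⁻¹ = ufc S x⁻¹ := by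
  funext ω; simp only [Pi.inv_apply, ufc]; split <;> simp

lemma ufc_comm {k : ℕ} (S T : Finset (Fin k)) (x y : G) :
    ⁅ufc S x, ufc T y⁆ = ufc (S ∪ T) ⁅x, y⁆ := by
  funext ω
  simp only [commutatorElement_def, Pi.mul_apply, Pi.inv_apply, ufc,
    Finset.forall_mem_union]
  by_cases hS : ∀ i ∈ S, ω i = true <;> by_cases hT : ∀ i ∈ T, ω i = true
  · rw [if_pos hS, if_pos hT, if_pos ⟨hS, hT⟩]
  · rw [if_pos hS, if_neg hT, if_neg (by tauto)]; group
  · rw [if_neg hS, if_pos hT, if_neg (by tauto)]; group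
  · rw [if_neg hS, if_neg hT, if_neg (by tauto)]; group

def hk (Gf : ℕ → Subgroup G) (k : ℕ) : Subgroup ((Fin k → Bool) → G) :=
  Subgroup.closure { c | ∃ (S : Finset (Fin k)) (x : G), x ∈ Gf S.card ∧ c = ufc S x }

lemma ufc_mem_hk {Gf : ℕ → Subgroup G} {k : ℕ} {S : Finset (Fin k)} {x : G}
    (hx : x ∈ Gf S.card) : ufc S x ∈ hk Gf k :=
  Subgroup.subset_closure ⟨S, x, hx, rfl⟩


def res {k : ℕ} (b : Bool) : ((Fin (k+1) → Bool) → G) →* ((Fin k → Bool) → G) where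
  toFun g ω := g (Fin.cons b ω)
  map_one' := rfl
  map_mul' _ _ := rfl

noncomputable def pre {k : ℕ} (S : Finset (Fin (k+1))) : Finset (Fin k) :=
  S.preimage Fin.succ (Fin.succ_injective k).injOn

lemma mem_pre {k : ℕ} {S : Finset (Fin (k+1))} {j : Fin k} :
    j ∈ pre S ↔ j.succ ∈ S := Finset.mem_preimage

lemma card_pre_le {k : ℕ} (S : Finset (Fin (k+1))) : (pre S).card ≤ S.card :=
  Finset.card_le_card_of_injOn Fin.succ (fun _ hj => mem_pre.mp hj)
    ((Fin.succ_injective k).injOn)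

lemma card_pre_add_one_le {k : ℕ} {S : Finset (Fin (k+1))} (h0 : (0 : Fin (k+1)) ∈ S) :
    (pre S).card + 1 ≤ S.card := by
  have h1 : (pre S).card ≤ (S.erase 0).card := by
    refine Finset.card_le_card_of_injOn Fin.succ (fun j hj => ?_)
      ((Fin.succ_injective k).injOn)
    exact Finset.mem_erase.mpr ⟨Fin.succ_ne_zero j, mem_pre.mp hj⟩
  have h2 := Finset.card_erase_of_mem h0
  have h3 : 1 ≤ S.card := Finset.card_pos.mpr ⟨0, h0⟩
  omega

lemma allCons_true {k : ℕ} (S : Finset (Fin (k+1))) (ω : Fin k → Bool) :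
    (∀ i ∈ S, (Fin.cons true ω : Fin (k+1) → Bool) i = true) ↔ ∀ j ∈ pre S, ω j = true := by
  constructor
  · intro H j hj
    have := H j.succ (mem_pre.mp hj)
    rwa [Fin.cons_succ] at this
  · intro H i hi
    induction i using Fin.cases with
    | zero => simp
    | succ j => rw [Fin.cons_succ]; exact H j (mem_pre.mpr hi)

lemma res_true_ufc {k : ℕ} (S : Finset (Fin (k+1))) (x : G) :
    res true (ufc S x) = ufc (pre S) x := by
  funext ω
  simp only [res, MonoidHom.coe_mk, OneHom.coe_mk, ufc]
  rw [if_congr (allCons_true S ω) rfl rfl]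

lemma allCons_false {k : ℕ} {S : Finset (Fin (k+1))} (h0 : (0 : Fin (k+1)) ∉ S)
    (ω : Fin k → Bool) :
    (∀ i ∈ S, (Fin.cons false ω : Fin (k+1) → Bool) i = true) ↔ ∀ j ∈ pre S, ω j = true := by
  constructor
  · intro H j hj
    have := H j.succ (mem_pre.mp hj)
    rwa [Fin.cons_succ] at this
  · intro H i hi
    induction i using Fin.cases with
    | zero => exact absurd hi h0
    | succ j => rw [Fin.cons_succ]; exact H j (mem_pre.mpr hi)

lemma res_false_ufc_not_mem {k : ℕ} {S : Finset (Fin (k+1))} (h0 : (0 : Fin (k+1)) ∉ S)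
    (x : G) : res false (ufc S x) = ufc (pre S) x := by
  funext ω
  simp only [res, MonoidHom.coe_mk, OneHom.coe_mk, ufc]
  rw [if_congr (allCons_false h0 ω) rfl rfl]

lemma res_false_ufc_mem {k : ℕ} {S : Finset (Fin (k+1))} (h0 : (0 : Fin (k+1)) ∈ S)
    (x : G) : res false (ufc S x) = 1 := by
  funext ω
  simp only [res, MonoidHom.coe_mk, OneHom.coe_mk, ufc]
  rw [if_neg]
  · rfl
  · intro H
    have := H 0 h0
    simp at this


variable {Gf : ℕ → Subgroup G}

lemma conj_gen_mem (hmono : ∀ i, Gf (i+1) ≤ Gf i)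
    (hcomm : ∀ i j, ⁅Gf i, Gf j⁆ ≤ Gf (i+j)) {k : ℕ}
    {T : Finset (Fin k)} {y : G} (hy : y ∈ Gf T.card)
    {n : (Fin k → Bool) → G} (hn : n ∈ hk (fun i => Gf (i+1)) k) :
    ufc T y * n * (ufc T y)⁻¹ ∈ hk (fun i => Gf (i+1)) k := by
  have hanti : Antitone Gf := antitone_nat_of_succ_le hmono
  induction hn using Subgroup.closure_induction with
  | mem m hm =>
    obtain ⟨S, x, hx, rfl⟩ := hm
    have key : ufc T y * ufc S x * (ufc T y)⁻¹ = ⁅ufc T y, ufc S x⁆ * ufc S x := by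
      rw [commutatorElement_def]; group
    rw [key, ufc_comm]
    refine mul_mem (ufc_mem_hk ?_) (ufc_mem_hk hx)
    have h1 : ⁅y, x⁆ ∈ Gf (T.card + (S.card + 1)) :=
      hcomm T.card (S.card + 1) (Subgroup.commutator_mem_commutator hy hx)
    exact hanti (by have := Finset.card_union_le T S; omega) h1
  | one => simpa using one_mem _
  | mul a b _ _ iha ihb =>
    have key : ufc T y * (a * b) * (ufc T y)⁻¹ =
        (ufc T y * a * (ufc T y)⁻¹) * (ufc T y * b * (ufc T y)⁻¹) := by group
    rw [key]; exact mul_mem iha ihb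
  | inv a _ iha =>
    have key : ufc T y * a⁻¹ * (ufc T y)⁻¹ = (ufc T y * a * (ufc T y)⁻¹)⁻¹ := by group
    rw [key]; exact inv_mem iha

lemma conj_mem_shift (hmono : ∀ i, Gf (i+1) ≤ Gf i)
    (hcomm : ∀ i j, ⁅Gf i, Gf j⁆ ≤ Gf (i+j)) {k : ℕ}
    {h n : (Fin k → Bool) → G} (hh : h ∈ hk Gf k)
    (hn : n ∈ hk (fun i => Gf (i+1)) k) :
    h * n * h⁻¹ ∈ hk (fun i => Gf (i+1)) k := by
  have hnorm : hk Gf k ≤ Subgroup.normalizer (hk (fun i => Gf (i+1)) k : Set ((Fin k → Bool) → G)) := by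
    rw [hk, Subgroup.closure_le]
    rintro c ⟨T, y, hy, rfl⟩
    rw [SetLike.mem_coe, Subgroup.mem_normalizer_iff]
    intro m
    constructor
    · exact fun hm => conj_gen_mem hmono hcomm hy hm
    · intro hm
      have h2 := conj_gen_mem hmono hcomm (inv_mem hy)
        (n := ufc T y * m * (ufc T y)⁻¹) hm
      rw [← ufc_inv] at h2
      have key : (ufc T y)⁻¹ * (ufc T y * m * (ufc T y)⁻¹) * ((ufc T y)⁻¹)⁻¹ = m := by
        group
      rwa [key] at h2
  exact (Subgroup.mem_normalizer_iff.mp (hnorm hh) n).mp hn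

lemma res_mem (hmono : ∀ i, Gf (i+1) ≤ Gf i)
    (hcomm : ∀ i j, ⁅Gf i, Gf j⁆ ≤ Gf (i+j)) {k : ℕ}
    {g : (Fin (k+1) → Bool) → G} (hg : g ∈ hk Gf (k+1)) :
    res true g ∈ hk Gf k ∧
      res true g * (res false g)⁻¹ ∈ hk (fun i => Gf (i+1)) k := by
  have hanti : Antitone Gf := antitone_nat_of_succ_le hmono
  induction hg using Subgroup.closure_induction with
  | mem c hc =>
    obtain ⟨S, x, hx, rfl⟩ := hc
    constructor
    · rw [res_true_ufc]
      exact ufc_mem_hk (hanti (card_pre_le S) hx)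
    · by_cases h0 : (0 : Fin (k+1)) ∈ S
      · rw [res_true_ufc, res_false_ufc_mem h0, inv_one, mul_one]
        exact ufc_mem_hk (hanti (card_pre_add_one_le h0) hx)
      · rw [res_true_ufc, res_false_ufc_not_mem h0, mul_inv_cancel]
        exact one_mem _
  | one => constructor <;> simp [one_mem]
  | mul a b _ _ iha ihb =>
    constructor
    · rw [map_mul]; exact mul_mem iha.1 ihb.1
    · have key : res true (a * b) * (res false (a * b))⁻¹ =
          (res true a * (res true b * (res false b)⁻¹) * (res true a)⁻¹) *
            (res true a * (res false a)⁻¹) := by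
        rw [map_mul, map_mul]; group
      rw [key]
      exact mul_mem (conj_mem_shift hmono hcomm iha.1 ihb.2) iha.2
  | inv a _ iha =>
    constructor
    · rw [map_inv]; exact inv_mem iha.1
    · have key : res true a⁻¹ * (res false a⁻¹)⁻¹ =
          (res true a)⁻¹ * (res true a * (res false a)⁻¹)⁻¹ * ((res true a)⁻¹)⁻¹ := by
        rw [map_inv, map_inv]; group
      rw [key]
      exact conj_mem_shift hmono hcomm (inv_mem iha.1) (inv_mem iha.2)

lemma eval_top_mem (hmono : ∀ i, Gf (i+1) ≤ Gf i) {k : ℕ}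
    {g : (Fin k → Bool) → G} (hg : g ∈ hk Gf k) :
    g (fun _ => true) ∈ Gf 0 := by
  have hanti : Antitone Gf := antitone_nat_of_succ_le hmono
  have : hk Gf k ≤ (Gf 0).comap (Pi.evalMonoidHom (fun _ : Fin k → Bool => G)
      (fun _ => true)) := by
    rw [hk, Subgroup.closure_le]
    rintro c ⟨S, x, hx, rfl⟩
    simp only [SetLike.mem_coe, Subgroup.mem_comap, Pi.evalMonoidHom_apply, ufc]
    split
    · exact hanti (Nat.zero_le _) hx
    · exact one_mem _
  exact this hg

lemma corner (k : ℕ) : ∀ (Gf : ℕ → Subgroup G), (∀ i, Gf (i+1) ≤ Gf i) →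
    (∀ i j, ⁅Gf i, Gf j⁆ ≤ Gf (i+j)) → ∀ g ∈ hk Gf k,
    (∀ ω, ω ≠ (fun _ => true) → g ω = 1) → g (fun _ => true) ∈ Gf k := by
  induction k with
  | zero => exact fun Gf hmono _ g hg _ => eval_top_mem hmono hg
  | succ k ih =>
    intro Gf hmono hcomm g hg hsupp
    have h0 : res false g = (1 : (Fin k → Bool) → G) := by
      funext ω
      refine hsupp _ ?_
      intro heq
      have := congrFun heq 0
      simp at this
    have hD := (res_mem hmono hcomm hg).2
    rw [h0, inv_one, mul_one] at hD
    have hsupp' : ∀ ω, ω ≠ (fun _ => true) → res true g ω = 1 := by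
      intro ω hω
      refine hsupp _ ?_
      intro heq
      apply hω
      funext j
      have := congrFun heq j.succ
      simpa using this
    have hcons : (Fin.cons true (fun _ => true) : Fin (k+1) → Bool) =
        (fun _ => true) := by
      funext i
      induction i using Fin.cases <;> simp
    have := ih (fun i => Gf (i+1)) (fun i => hmono (i+1))
      (fun i j => le_trans (hcomm (i+1) (j+1))
        (le_of_eq_of_le (congrArg Gf (by omega)) (hmono (i+j+1))))
      (res true g) hD hsupp'
    have heval : res true g (fun _ => true) = g (fun _ => true) := by
      show g (Fin.cons true (fun _ => true)) = _
      rw [hcons]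
    rwa [heval] at this

end HKAux

/-- For a filtered group of degree `s` and `k = s + 1`, two Host–Kra cubes
agreeing at all vertices except the top vertex agree at the top vertex too. -/
theorem hostKra_corner_uniqueness {G : Type*} [Group G] (Gf : ℕ → Subgroup G) (s : ℕ)
    (hf : IsGroupFiltration Gf) (hdeg : Gf (s + 1) = ⊥)
    (g g' : (Fin (s + 1) → Bool) → G)
    (hg : g ∈ hostKra Gf (s + 1)) (hg' : g' ∈ hostKra Gf (s + 1))
    (h : ∀ ω, ω ≠ topVert (s + 1) → g ω = g' ω) :
    g (topVert (s + 1)) = g' (topVert (s + 1)) := by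
  have hmem : g⁻¹ * g' ∈ HKAux.hk Gf (s + 1) := mul_mem (inv_mem hg) hg'
  have hsupp : ∀ ω, ω ≠ (fun _ => true) → (g⁻¹ * g') ω = 1 := by
    intro ω hω
    have hgg : g ω = g' ω := h ω hω
    simp [Pi.mul_apply, Pi.inv_apply, hgg]
  have hmem2 := HKAux.corner (s + 1) Gf hf.mono hf.comm (g⁻¹ * g') hmem hsupp
  rw [hdeg, Subgroup.mem_bot] at hmem2
  have h1 : (g (topVert (s + 1)))⁻¹ * g' (topVert (s + 1)) = 1 := hmem2
  exact inv_mul_eq_one.mp h1
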